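/- For a composition η = (η_1,...,η_N) of nonnegative integers and defining η̄_i := α·η_i − #{k < i : η_k ≥ η_i} − #{k > i : η_k > η_i}, one has for the composition Φη := (η_2,...,η_N, η_1+1) the identities (Φη)̄_i = η̄_{i+1} for 1 ≤ i ≤ N−1 and (Φη)̄_N = η̄_1 + α. -/
import Mathlib
set_option maxHeartbeats 1000000

/-- The eigenvalue `η̄_i = α η_i − #{k < i : η_k ≥ η_i} − #{k > i : η_k > η_i}`. -/
noncomputable def ebar {N : ℕ} (α : ℝ) (η : Fin N → ℕ) (i : Fin N) : ℝ :=
  α * (η i : ℝ) -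
    ((Finset.univ.filter fun k : Fin N => k < i ∧ η i ≤ η k).card : ℝ) -
    ((Finset.univ.filter fun k : Fin N => i < k ∧ η i < η k).card : ℝ)

/-- The raising operation on compositions: `Φη = (η_2, …, η_N, η_1 + 1)`. -/
def PhiComp {N : ℕ} (η : Fin N → ℕ) : Fin N → ℕ := fun i =>
  if h : (i : ℕ) + 1 < N then η ⟨(i : ℕ) + 1, h⟩ else η ⟨0, i.pos⟩ + 1

lemma ebar_eq {N : ℕ} (α : ℝ) (η : Fin N → ℕ) (i : Fin N) :
    ebar α η i = α * η i -
      ((Finset.univ.filter fun k : Fin N =>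
        (k < i ∧ η i ≤ η k) ∨ (i < k ∧ η i < η k)).card : ℝ) := by
  rw [ebar, Finset.filter_or, Finset.card_union_of_disjoint]
  · push_cast; ring
  · rw [Finset.disjoint_left]
    intro k hk hk'
    simp only [Finset.mem_filter] at hk hk'
    exact absurd (hk.2.1.trans hk'.2.1) (lt_irrefl k)

theorem stmt_0 (N : ℕ) (hN : 1 ≤ N) (α : ℝ) (η : Fin N → ℕ) :
    (∀ i : Fin N, ∀ h : (i : ℕ) + 1 < N,
      ebar α (PhiComp η) i = ebar α η ⟨(i : ℕ) + 1, h⟩) ∧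
    ebar α (PhiComp η) ⟨N - 1, by omega⟩ = ebar α η ⟨0, by omega⟩ + α := by
  obtain ⟨n, rfl⟩ : ∃ n, N = n + 1 := ⟨N - 1, by omega⟩
  constructor
  · intro i h
    rw [ebar_eq, ebar_eq]
    have hi : PhiComp η i = η ⟨(i : ℕ) + 1, h⟩ := by simp [PhiComp, h]
    rw [hi]
    congr 2
    apply Finset.card_equiv (finRotate (n + 1))
    intro k
    simp only [Finset.mem_filter, Finset.mem_univ, true_and, finRotate_succ_apply]
    by_cases hk : (k : ℕ) + 1 < n + 1
    · have hk1 : k + 1 = (⟨(k : ℕ) + 1, hk⟩ : Fin (n + 1)) := by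
        ext
        rw [Fin.val_add_one_of_lt]
        rw [Fin.lt_def]; simp; omega
      rw [hk1]
      have hpk : PhiComp η k = η ⟨(k : ℕ) + 1, hk⟩ := by simp [PhiComp, hk]
      rw [hpk]
      simp only [Fin.lt_def]
      constructor <;> (rintro (⟨h1, h2⟩ | ⟨h1, h2⟩)) <;> simp_all
    · have hkn : (k : ℕ) = n := by omega
      have hk1 : k + 1 = (⟨0, by omega⟩ : Fin (n + 1)) := by
        ext
        rw [Fin.val_add_one]
        simp [Fin.ext_iff, hkn, Fin.last]
      rw [hk1]
      have hpk : PhiComp η k = η ⟨0, by omega⟩ + 1 := by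
        simp only [PhiComp, hk, dif_neg, not_false_iff]
      rw [hpk]
      simp only [Fin.lt_def]
      constructor <;> (rintro (⟨h1, h2⟩ | ⟨h1, h2⟩)) <;> simp_all <;> omega
  · rw [ebar_eq, ebar_eq]
    have hlast : PhiComp η ⟨n + 1 - 1, by omega⟩ = η ⟨0, by omega⟩ + 1 := by
      simp [PhiComp]
    rw [hlast]
    have hcard : (Finset.univ.filter fun k : Fin (n + 1) =>
        (k < ⟨n + 1 - 1, by omega⟩ ∧ η ⟨0, by omega⟩ + 1 ≤ PhiComp η k) ∨
        ((⟨n + 1 - 1, by omega⟩ : Fin (n+1)) < k ∧ η ⟨0, by omega⟩ + 1 < PhiComp η k)).card =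
      (Finset.univ.filter fun k : Fin (n + 1) =>
        (k < ⟨0, by omega⟩ ∧ η ⟨0, by omega⟩ ≤ η k) ∨
        ((⟨0, by omega⟩ : Fin (n+1)) < k ∧ η ⟨0, by omega⟩ < η k)).card := by
      apply Finset.card_equiv (finRotate (n + 1))
      intro k
      simp only [Finset.mem_filter, Finset.mem_univ, true_and, finRotate_succ_apply]
      by_cases hk : (k : ℕ) + 1 < n + 1
      · have hk1 : k + 1 = (⟨(k : ℕ) + 1, hk⟩ : Fin (n + 1)) := by
          ext
          rw [Fin.val_add_one_of_lt]
          rw [Fin.lt_def]; simp; omega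
        rw [hk1]
        have hpk : PhiComp η k = η ⟨(k : ℕ) + 1, hk⟩ := by simp [PhiComp, hk]
        rw [hpk]
        simp only [Fin.lt_def]
        constructor <;> (rintro (⟨h1, h2⟩ | ⟨h1, h2⟩)) <;> simp_all <;> omega
      · have hkn : (k : ℕ) = n := by omega
        have hk1 : k + 1 = (⟨0, by omega⟩ : Fin (n + 1)) := by
          ext
          rw [Fin.val_add_one]
          simp [Fin.ext_iff, hkn, Fin.last]
        rw [hk1]
        simp only [Fin.lt_def]
        constructor <;> (rintro (⟨h1, h2⟩ | ⟨h1, h2⟩)) <;> simp_all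
    rw [hcard]
    push_cast
    ring
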